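/- Let g₁ and g₂ be elements of the coset ⟨h⟩b = { hⁱ b : i ∈ ℤ } both having order 2. Then g₁ and g₂ are conjugate in N. Consequently the elements of order 2 in ⟨h⟩b form a single conjugacy class of N. -/
import Mathlib


/-- In the abstract model `N = ⟨h⟩ ⋊ ⟨b⟩` of the normalizer of a Singer cycle of
`GL(2,q)` (with `orderOf h = q² - 1`, `orderOf b = 2`, `b h b⁻¹ = h^q`), any two
elements of order 2 in the coset `⟨h⟩b` are conjugate in `N`. -/
theorem singer_normalizer_order_two_conj
    (p k₀ : ℕ) (hp : p.Prime) (hk₀ : 1 ≤ k₀)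
    (G : Type) [Group G] (h b : G)
    (hgen : Subgroup.closure ({h, b} : Set G) = ⊤)
    (hh : orderOf h = (p ^ k₀) ^ 2 - 1)
    (hb : orderOf b = 2)
    (hrel : b * h * b⁻¹ = h ^ (p ^ k₀))
    (g₁ g₂ : G)
    (hg₁ : ∃ i : ℤ, g₁ = h ^ i * b) (hg₂ : ∃ i : ℤ, g₂ = h ^ i * b)
    (ho₁ : orderOf g₁ = 2) (ho₂ : orderOf g₂ = 2) :
    IsConj g₁ g₂ := by
  obtain ⟨i₁, rfl⟩ := hg₁
  obtain ⟨i₂, rfl⟩ := hg₂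
  set q : ℕ := p ^ k₀ with hqdef
  have hq2 : 2 ≤ q := le_trans hp.two_le (Nat.le_self_pow (by omega) p)
  have hb2 : b * b = 1 := by
    have := pow_orderOf_eq_one b
    rwa [hb, sq] at this
  have hbinv : b⁻¹ = b := inv_eq_of_mul_eq_one_right hb2
  have hconj : ∀ m : ℤ, b * h ^ m * b⁻¹ = h ^ ((q : ℤ) * m) := by
    intro m
    have h1 : (MulAut.conj b) (h ^ m) = ((MulAut.conj b) h) ^ m := map_zpow _ _ _
    simp only [MulAut.conj_apply] at h1
    rw [h1, hrel, ← zpow_natCast h q, ← zpow_mul]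
  have hcast : ((orderOf h : ℤ)) = ((q:ℤ) - 1) * ((q:ℤ) + 1) := by
    rw [hh]
    have h1 : 1 ≤ q ^ 2 := Nat.one_le_pow _ _ (by omega)
    push_cast [h1]
    ring
  have hsq : ∀ i : ℤ, (h ^ i * b) * (h ^ i * b) = h ^ (i * ((q:ℤ) + 1)) := by
    intro i
    calc (h ^ i * b) * (h ^ i * b)
        = h ^ i * (b * h ^ i * b⁻¹) * (b * b) := by group
      _ = h ^ i * h ^ ((q:ℤ) * i) * 1 := by rw [hconj, hb2]
      _ = h ^ (i * ((q:ℤ) + 1)) := by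
          rw [mul_one, ← zpow_add]; congr 1; ring
  have hdvd : ∀ i : ℤ, orderOf (h ^ i * b) = 2 → ((q:ℤ) - 1) ∣ i := by
    intro i hi
    have h1 : (h ^ i * b) ^ 2 = 1 := by rw [← hi]; exact pow_orderOf_eq_one _
    rw [sq, hsq] at h1
    have h2 : ((orderOf h : ℤ)) ∣ i * ((q:ℤ) + 1) :=
      orderOf_dvd_iff_zpow_eq_one.mpr h1
    rw [hcast] at h2
    have hne : ((q:ℤ) + 1) ≠ 0 := by positivity
    exact (mul_dvd_mul_iff_right hne).mp h2
  obtain ⟨d₁, hd₁⟩ := hdvd i₁ ho₁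
  obtain ⟨d₂, hd₂⟩ := hdvd i₂ ho₂
  rw [isConj_iff]
  refine ⟨h ^ (d₁ - d₂), ?_⟩
  have key : ∀ j i : ℤ, h ^ j * (h ^ i * b) * (h ^ j)⁻¹ = h ^ (i + j - (q:ℤ) * j) * b := by
    intro j i
    calc h ^ j * (h ^ i * b) * (h ^ j)⁻¹
        = h ^ j * h ^ i * (b * h ^ (-j) * b⁻¹) * b := by
          rw [zpow_neg]; group
      _ = h ^ j * h ^ i * h ^ ((q:ℤ) * (-j)) * b := by rw [hconj]
      _ = h ^ (i + j - (q:ℤ) * j) * b := by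
          rw [← zpow_add, ← zpow_add]; congr 1; ring
  rw [key]
  have : i₁ + (d₁ - d₂) - (q:ℤ) * (d₁ - d₂) = i₂ := by
    rw [hd₁, hd₂]; ring
  rw [this]
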